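/- Let X be a topological space. If X = X₁ ∪ … ∪ Xₙ with each Xᵢ closed in X, then the Pillay rank of X equals the maximum of the Pillay ranks of the Xᵢ. -/

import Mathlib

/-- Auxiliary definition by well-founded recursion on ordinals. -/
noncomputable def PRankGeAux {X : Type u} [TopologicalSpace X] :
    Ordinal.{u} → Set X → Prop :=
  WellFounded.fix Ordinal.lt_wf fun α ih S =>
    S.Nonempty ∧ ∀ β (h : β < α), ∃ Y : Set X, Y ⊆ S ∧ Y = closure Y ∩ S ∧
      (¬ ∃ U : Set X, IsOpen U ∧ (U ∩ S).Nonempty ∧ U ∩ S ⊆ closure Y) ∧ ih β h Y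

/-- `PRankGe S α` expresses that the Pillay rank of the subset `S` (with its subspace
topology) is at least the ordinal `α`: `S` is nonempty, and for every `β < α` there is a
subset `Y ⊆ S` which is closed in `S` (i.e. `Y = closure Y ∩ S`), nowhere dense in `S`
(no nonempty relatively open subset of `S` is contained in the closure of `Y`), and of
rank at least `β`. -/
noncomputable def PRankGe {X : Type u} [TopologicalSpace X] (S : Set X)
    (α : Ordinal.{u}) : Prop :=
  PRankGeAux α S

lemma PRankGe_iff {X : Type u} [TopologicalSpace X] (S : Set X) (α : Ordinal.{u}) :
    PRankGe S α ↔ S.Nonempty ∧ ∀ β, β < α → ∃ Y : Set X, Y ⊆ S ∧ Y = closure Y ∩ S ∧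
      (¬ ∃ U : Set X, IsOpen U ∧ (U ∩ S).Nonempty ∧ U ∩ S ⊆ closure Y) ∧ PRankGe Y β := by
  unfold PRankGe PRankGeAux
  conv_lhs => rw [WellFounded.fix_eq]

lemma PRankGe.nonempty {X : Type u} [TopologicalSpace X] {S : Set X} {α : Ordinal.{u}}
    (h : PRankGe S α) : S.Nonempty := ((PRankGe_iff S α).1 h).1

lemma PRankGe.down {X : Type u} [TopologicalSpace X] {S : Set X} {α β : Ordinal.{u}}
    (hβ : β ≤ α) (h : PRankGe S α) : PRankGe S β := by
  rw [PRankGe_iff] at h ⊢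
  exact ⟨h.1, fun γ hγ => h.2 γ (hγ.trans_le hβ)⟩

/-- Monotonicity: a closed subset contained in `S` passes its rank up to `S`. -/
lemma prank_up {X : Type u} [TopologicalSpace X] {T S : Set X} {α : Ordinal.{u}}
    (hT : IsClosed T) (hTS : T ⊆ S) (h : PRankGe T α) : PRankGe S α := by
  rw [PRankGe_iff] at h ⊢
  refine ⟨h.1.mono hTS, fun β hβ => ?_⟩
  obtain ⟨Y, hYT, hYcl, hYnwd, hYrk⟩ := h.2 β hβ
  have hclY : closure Y ⊆ T := hT.closure_subset_iff.2 hYT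
  have hYeq : Y = closure Y :=
    Set.Subset.antisymm subset_closure (by intro x hx; rw [hYcl]; exact ⟨hx, hclY hx⟩)
  refine ⟨Y, hYT.trans hTS, ?_, ?_, hYrk⟩
  · rw [← hYeq, Set.inter_eq_left.2 (hYT.trans hTS)]
  · rintro ⟨U, hUo, ⟨x, hxU, hxS⟩, hsub⟩
    have hUS_T : U ∩ S ⊆ T := fun y hy => hYT (hYeq ▸ hsub hy)
    refine hYnwd ⟨U, hUo, ⟨x, hxU, hUS_T ⟨hxU, hxS⟩⟩, ?_⟩
    exact fun y hy => hsub ⟨hy.1, hTS hy.2⟩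

/-- Main lemma: rank passes down to a member of a finite closed cover. -/
lemma prank_down {X : Type u} [TopologicalSpace X] :
    ∀ α : Ordinal.{u}, ∀ S : Set X, IsClosed S → ∀ m : ℕ, ∀ Ts : Fin m → Set X,
      (∀ i, IsClosed (Ts i)) → S ⊆ ⋃ i, Ts i → PRankGe S α → ∃ i, PRankGe (Ts i) α := by
  intro α
  induction α using Ordinal.induction with
  | h α IH =>
  intro S hS m Ts hTs hcov hrk
  rw [PRankGe_iff] at hrk
  obtain ⟨hne, hwit⟩ := hrk
  rcases Nat.eq_zero_or_pos m with rfl | hm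
  · obtain ⟨x, hx⟩ := hne
    exact absurd (hcov hx) (by simp)
  rcases eq_or_ne α 0 with rfl | hα
  · obtain ⟨x, hx⟩ := hne
    obtain ⟨i, hi⟩ := Set.mem_iUnion.1 (hcov hx)
    exact ⟨i, (PRankGe_iff _ _).2 ⟨⟨x, hi⟩, fun β hβ => absurd hβ (not_lt_of_ge (zero_le (a := β)))⟩⟩
  have hαpos : 0 < α := pos_iff_ne_zero.2 hα
  -- for each β < α produce an index and a witness set
  have key : ∀ β, β < α → ∃ i : Fin m, ∃ W : Set X, W ⊆ Ts i ∧ W = closure W ∩ Ts i ∧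
      (¬ ∃ U : Set X, IsOpen U ∧ (U ∩ Ts i).Nonempty ∧ U ∩ Ts i ⊆ closure W) ∧
      PRankGe W β := by
    intro β hβ
    obtain ⟨Z, hZS, hZcl, hZnwd, hZrk⟩ := hwit β hβ
    have hclZ : closure Z ⊆ S := hS.closure_subset_iff.2 hZS
    have hZeq : Z = closure Z :=
      Set.Subset.antisymm subset_closure (by intro x hx; rw [hZcl]; exact ⟨hx, hclZ hx⟩)
    have hZclosed : IsClosed Z := by rw [hZeq]; exact isClosed_closure
    set V : Fin m → Set X := fun i => {x | ∃ U : Set X, IsOpen U ∧ x ∈ U ∧ U ∩ Ts i ⊆ Z}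
      with hV
    set W : Fin m → Set X := fun i => (Z ∩ Ts i) \ V i with hWdef
    have hVopen : ∀ i, IsOpen (V i) := by
      intro i
      rw [isOpen_iff_forall_mem_open]
      rintro x ⟨U, hUo, hxU, hsub⟩
      exact ⟨U, fun y hy => ⟨U, hUo, hy, hsub⟩, hUo, hxU⟩
    have hWclosed : ∀ i, IsClosed (W i) := fun i =>
      (hZclosed.inter (hTs i)).sdiff (hVopen i)
    have hWZ : ∀ i, W i ⊆ Z := fun i x hx => hx.1.1
    have hWT : ∀ i, W i ⊆ Ts i := fun i x hx => hx.1.2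
    have hcover : Z ⊆ ⋃ i, W i := by
      intro z hz
      by_contra hz'
      have hz'' : ∀ i, z ∉ W i := by simpa using hz'
      have hU : ∀ i, ∃ U : Set X, IsOpen U ∧ z ∈ U ∧ U ∩ Ts i ⊆ Z := by
        intro i
        by_cases hzi : z ∈ Ts i
        · have hzV : z ∈ V i := by
            by_contra hzV
            exact hz'' i ⟨⟨hz, hzi⟩, hzV⟩
          exact hzV
        · exact ⟨(Ts i)ᶜ, (hTs i).isOpen_compl, hzi, by simp⟩
      choose U hUo hUz hUsub using hU
      refine hZnwd ⟨⋂ i, U i, isOpen_iInter_of_finite hUo,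
        ⟨z, Set.mem_iInter.2 hUz, hZS hz⟩, ?_⟩
      rintro x ⟨hxU, hxS⟩
      obtain ⟨j, hj⟩ := Set.mem_iUnion.1 (hcov hxS)
      exact subset_closure (hUsub j ⟨Set.mem_iInter.1 hxU j, hj⟩)
    obtain ⟨i, hi⟩ := IH β hβ Z hZclosed m W hWclosed hcover hZrk
    have hWicl : closure (W i) = W i := (hWclosed i).closure_eq
    refine ⟨i, W i, hWT i, ?_, ?_, hi⟩
    · rw [hWicl, Set.inter_eq_left.2 (hWT i)]
    · rintro ⟨U, hUo, ⟨x, hxU, hxT⟩, hsub⟩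
      have hUW : U ∩ Ts i ⊆ W i := by rw [← hWicl]; exact hsub
      have hxW : x ∈ W i := hUW ⟨hxU, hxT⟩
      exact hxW.2 ⟨U, hUo, hxU, fun y hy => (hUW hy).1.1⟩
  choose f Wit hW1 hW2 hW3 hW4 using key
  -- pigeonhole: some index occurs cofinally below α
  have hgood : ∃ i : Fin m, ∀ β, β < α → ∃ β', ∃ h' : β' < α, β ≤ β' ∧ f β' h' = i := by
    by_contra hbad
    push_neg at hbad
    choose g hg1 hg2 using hbad
    haveI : Nonempty (Fin m) := ⟨⟨0, hm⟩⟩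
    set βs := Finset.univ.sup' Finset.univ_nonempty g with hβs
    have hβsα : βs < α := by
      obtain ⟨i, _, hi⟩ := Finset.exists_mem_eq_sup' Finset.univ_nonempty g
      rw [hβs, hi]
      exact hg1 i
    exact hg2 (f βs hβsα) βs hβsα (Finset.le_sup' g (Finset.mem_univ _)) rfl
  obtain ⟨i, hi⟩ := hgood
  refine ⟨i, (PRankGe_iff _ _).2 ⟨?_, ?_⟩⟩
  · obtain ⟨β', h', _, hf⟩ := hi 0 hαpos
    exact ((hW4 β' h').nonempty).mono (hf ▸ hW1 β' h')
  · intro β hβ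
    obtain ⟨β', h', hle, hf⟩ := hi β hβ
    refine ⟨Wit β' h', hf ▸ hW1 β' h', hf ▸ hW2 β' h', hf ▸ hW3 β' h',
      (hW4 β' h').down hle⟩

/-- If the topological space `X` is the union of finitely many subsets `X₁, …, Xₙ`, each
closed in `X`, then the Pillay rank of `X` equals the maximum of the Pillay ranks of the
`Xᵢ`; equivalently, for every ordinal `α`, `RK(X) ≥ α` iff `RK(Xᵢ) ≥ α` for some `i`. -/
theorem stmt11 {X : Type u} [TopologicalSpace X] (n : ℕ) (Xs : Fin n → Set X)
    (hclosed : ∀ i, IsClosed (Xs i)) (hcover : ⋃ i, Xs i = Set.univ) :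
    ∀ α : Ordinal.{u}, PRankGe (Set.univ : Set X) α ↔ ∃ i, PRankGe (Xs i) α := by
  intro α
  constructor
  · intro h
    exact prank_down α Set.univ isClosed_univ n Xs hclosed (by rw [hcover]) h
  · rintro ⟨i, hi⟩
    exact prank_up (hclosed i) (Set.subset_univ _) hi
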